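/- The function NLD(x,y) = 2·LD(x,y)/(|x|+|y|+LD(x,y)) is a metric on nonempty strings; in particular it satisfies the triangle inequality NLD(x,y) + NLD(y,z) ≥ NLD(x,z). -/

import Mathlib

section LevenshteinDefs

namespace Levenshtein

structure Cost (α β δ : Type*) where
  delete : α → δ
  insert : β → δ
  substitute : α → β → δ

def defaultCost {α : Type*} [DecidableEq α] : Cost α α ℕ where
  delete _ := 1
  insert _ := 1
  substitute a b := if a = b then 0 else 1

def impl {α β δ : Type*} [AddZeroClass δ] [Min δ] (C : Cost α β δ)
    (xs : List α) (y : β) (d : {r : List δ // 0 < r.length}) :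
    {r : List δ // 0 < r.length} :=
  let ⟨ds, w⟩ := d
  xs.zip (ds.zip ds.tail) |>.foldr
    (init := ⟨[C.insert y + ds.getLast (List.length_pos_iff.mp w)], by simp⟩)
    (fun ⟨x, d₀, d₁⟩ ⟨r, w⟩ =>
      ⟨min (C.delete x + r[0]) (min (C.insert y + d₀) (C.substitute x y + d₁)) :: r, by simp⟩)

end Levenshtein

open Levenshtein in
def suffixLevenshtein {α β δ : Type*} [AddZeroClass δ] [Min δ] (C : Cost α β δ)
    (xs : List α) (ys : List β) : {r : List δ // 0 < r.length} :=
  ys.foldr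
    (impl C xs)
    (xs.foldr (init := ⟨[0], by simp⟩) (fun a ⟨ds, w⟩ => ⟨(C.delete a + ds[0]) :: ds, by simp⟩))

open Levenshtein in
def levenshtein {α β δ : Type*} [AddZeroClass δ] [Min δ] (C : Cost α β δ)
    (xs : List α) (ys : List β) : δ :=
  let ⟨r, w⟩ := suffixLevenshtein C xs ys
  r[0]

end LevenshteinDefs

namespace Levenshtein

variable {α β δ : Type*} [AddZeroClass δ] [Min δ] (C : Cost α β δ)

theorem impl_cons {x : α} {xs : List α} {y : β} {d : δ} {ds : List δ} {w}
    (w' : 0 < List.length ds) :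
    impl C (x :: xs) y ⟨d :: ds, w⟩ =
      let ⟨r, w⟩ := impl C xs y ⟨ds, w'⟩
      ⟨min (C.delete x + r[0]) (min (C.insert y + d) (C.substitute x y + ds[0])) :: r, by simp⟩ :=
  match ds, w' with | _ :: _, _ => rfl

theorem impl_cons_fst_zero {x : α} {xs : List α} {y : β} {d : δ} {ds : List δ} {w}
    (h) (w' : 0 < List.length ds) :
    (impl C (x :: xs) y ⟨d :: ds, w⟩).1[0]'h =
      let ⟨r, w⟩ := impl C xs y ⟨ds, w'⟩
      min (C.delete x + r[0]) (min (C.insert y + d) (C.substitute x y + ds[0])) :=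
  match ds, w' with | _ :: _, _ => rfl

theorem impl_length {xs : List α} {y : β} (d : {r : List δ // 0 < r.length})
    (w : d.1.length = xs.length + 1) :
    (impl C xs y d).1.length = xs.length + 1 := by
  induction xs generalizing d with
  | nil => rfl
  | cons x xs ih =>
    dsimp [impl]
    match d, w with
    | ⟨d₁ :: d₂ :: ds, _⟩, w =>
      dsimp
      congr 1
      exact ih ⟨d₂ :: ds, (by simp)⟩ (by simpa using w)

end Levenshtein

open Levenshtein

section LevLemmas

variable {α β δ : Type*} [AddZeroClass δ] [Min δ] (C : Cost α β δ)

theorem suffixLevenshtein_length' (xs : List α) (ys : List β) :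
    (suffixLevenshtein C xs ys).1.length = xs.length + 1 := by
  induction ys with
  | nil =>
    dsimp [suffixLevenshtein]
    induction xs with
    | nil => rfl
    | cons _ xs ih =>
      simp_all
  | cons y ys ih =>
    dsimp [suffixLevenshtein]
    rw [impl_length]
    exact ih

theorem suffixLevenshtein_cons₂' (xs : List α) (y ys) :
    suffixLevenshtein C xs (y :: ys) = (impl C xs) y (suffixLevenshtein C xs ys) :=
  rfl

theorem levenshtein_nil_cons (y) (ys) :
    levenshtein C [] (y :: ys) = C.insert y + levenshtein C [] ys := by
  have h := suffixLevenshtein_length' C ([] : List α) ys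
  rw [levenshtein, levenshtein, suffixLevenshtein_cons₂']
  generalize suffixLevenshtein C [] ys = d at h ⊢
  match d, h with
  | ⟨[e], _⟩, _ => rfl

theorem levenshtein_cons_nil (x : α) (xs : List α) :
    levenshtein C (x :: xs) [] = C.delete x + levenshtein C xs [] :=
  rfl

theorem suffixLevenshtein_cons₁_aux' {α} {x y : {r : List α // 0 < r.length}}
    (w₀ : x.1[0]'x.2 = y.1[0]'y.2) (w : x.1.tail = y.1.tail) : x = y := by
  match x, y with
  | ⟨hx :: tx, _⟩, ⟨hy :: ty, _⟩ => simp_all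

theorem suffixLevenshtein_cons₁' (x : α) (xs ys) :
    suffixLevenshtein C (x :: xs) ys =
      ⟨levenshtein C (x :: xs) ys ::
        (suffixLevenshtein C xs ys).1, by simp⟩ := by
  induction ys with
  | nil =>
    dsimp [levenshtein, suffixLevenshtein]
    rfl
  | cons y ys ih =>
    apply suffixLevenshtein_cons₁_aux'
    · rfl
    · rw [suffixLevenshtein_cons₂' (xs := x :: xs), ih, impl_cons]
      · rfl
      · simp [suffixLevenshtein_length']

theorem levenshtein_cons_cons (x : α) (xs : List α) (y : β) (ys : List β) :
    levenshtein C (x :: xs) (y :: ys) =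
      min (C.delete x + levenshtein C xs (y :: ys))
        (min (C.insert y + levenshtein C (x :: xs) ys)
          (C.substitute x y + levenshtein C xs ys)) := by
  show (suffixLevenshtein C (x :: xs) (y :: ys)).1[0]'(by simp [suffixLevenshtein_length']) = _
  conv =>
    lhs
    dsimp only [suffixLevenshtein_cons₂']
  simp only [suffixLevenshtein_cons₁']
  rw [impl_cons_fst_zero]
  rfl

@[simp] theorem levenshtein_nil_nil' : levenshtein C [] [] = 0 := rfl

@[simp] theorem defaultCost_delete' {α : Type*} [DecidableEq α] (a : α) :
    (defaultCost : Cost α α ℕ).delete a = 1 := rfl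

@[simp] theorem defaultCost_insert' {α : Type*} [DecidableEq α] (a : α) :
    (defaultCost : Cost α α ℕ).insert a = 1 := rfl

@[simp] theorem defaultCost_substitute' {α : Type*} [DecidableEq α] (a b : α) :
    (defaultCost : Cost α α ℕ).substitute a b = if a = b then 0 else 1 := rfl

end LevLemmas

variable {α : Type*} [Fintype α] [DecidableEq α]

/-- Levenshtein distance: the minimum number of single-character insertions,
deletions, and substitutions transforming one string into another. -/
def LD (x y : List α) : ℕ := levenshtein Levenshtein.defaultCost x y

/-- Normalized Levenshtein distance. -/
noncomputable def NLD (x y : List α) : ℝ :=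
  2 * LD x y / (x.length + y.length + LD x y)

lemma LD_nil_left : ∀ y : List α, LD [] y = y.length
  | [] => by simp [LD]
  | y :: ys => by
    simp [LD, levenshtein_nil_cons] at *
    have := LD_nil_left ys
    simp [LD] at this
    omega

lemma LD_nil_right : ∀ x : List α, LD x [] = x.length
  | [] => by simp [LD]
  | x :: xs => by
    simp [LD, levenshtein_cons_nil] at *
    have := LD_nil_right xs
    simp [LD] at this
    omega

lemma LD_cons_cons (a b : α) (xs ys : List α) :
    LD (a :: xs) (b :: ys) =
      min (1 + LD xs (b :: ys))
        (min (1 + LD (a :: xs) ys) ((if a = b then 0 else 1) + LD xs ys)) := by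
  simp [LD, levenshtein_cons_cons]

lemma LD_self : ∀ x : List α, LD x x = 0
  | [] => by simp [LD]
  | a :: xs => by
    rw [LD_cons_cons]
    simp [LD_self xs]

lemma LD_symm : ∀ x y : List α, LD x y = LD y x
  | [], y => by rw [LD_nil_left, LD_nil_right]
  | x :: xs, [] => by rw [LD_nil_left, LD_nil_right]
  | x :: xs, y :: ys => by
    have h1 := LD_symm xs (y :: ys)
    have h2 := LD_symm (x :: xs) ys
    have h3 := LD_symm xs ys
    rw [LD_cons_cons, LD_cons_cons, h1, h2, h3,
      show (if x = y then (0:ℕ) else 1) = (if y = x then 0 else 1) by simp [eq_comm]]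
    omega
termination_by x y => x.length + y.length

lemma LD_eq_zero : ∀ x y : List α, LD x y = 0 → x = y
  | [], [] => fun _ => rfl
  | [], y :: ys => by rw [LD_nil_left]; simp
  | x :: xs, [] => by rw [LD_nil_right]; simp
  | x :: xs, y :: ys => by
    intro h
    rw [LD_cons_cons] at h
    by_cases hxy : x = y
    · simp only [if_pos hxy] at h
      have : LD xs ys = 0 := by omega
      rw [hxy, LD_eq_zero xs ys this]
    · simp only [if_neg hxy] at h
      omega

lemma le_LD_add : ∀ y z : List α, z.length ≤ y.length + LD y z
  | [], z => by rw [LD_nil_left]; omega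
  | y :: ys, [] => by simp
  | y :: ys, z :: zs => by
    have i1 := le_LD_add ys (z :: zs)
    have i2 := le_LD_add (y :: ys) zs
    have i3 := le_LD_add ys zs
    rw [LD_cons_cons]
    simp only [List.length_cons] at *
    generalize (if y = z then (0:ℕ) else 1) = c
    omega
termination_by y z => y.length + z.length

lemma LD_le_sum : ∀ x z : List α, LD x z ≤ x.length + z.length
  | [], z => by rw [LD_nil_left]; omega
  | x :: xs, [] => by rw [LD_nil_right]; omega
  | x :: xs, z :: zs => by
    have i := LD_le_sum xs zs
    rw [LD_cons_cons]
    have hc : (if x = z then (0:ℕ) else 1) ≤ 1 := by split_ifs <;> omega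
    simp only [List.length_cons]
    generalize (if x = z then (0:ℕ) else 1) = c at hc ⊢
    omega
termination_by x z => x.length + z.length

lemma LD_triangle : ∀ x y z : List α, LD x z ≤ LD x y + LD y z
  | [], y, z => by
    rw [LD_nil_left, LD_nil_left]
    exact le_LD_add y z
  | x :: xs, y, [] => by
    rw [LD_nil_right, LD_nil_right]
    have := le_LD_add y (x :: xs)
    rw [LD_symm y (x :: xs)] at this
    omega
  | x :: xs, [], z :: zs => by
    rw [LD_nil_left, LD_nil_right]
    exact LD_le_sum _ _
  | a :: xs, b :: ys, c :: zs => by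
    have i1 := LD_triangle xs (b :: ys) (c :: zs)
    have i2 := LD_triangle (a :: xs) (b :: ys) zs
    have i3 := LD_triangle (a :: xs) ys (c :: zs)
    have i4 := LD_triangle (a :: xs) ys zs
    have i5 := LD_triangle xs ys (c :: zs)
    have i6 := LD_triangle xs ys zs
    have hc : (if a = c then (0:ℕ) else 1) ≤
        (if a = b then 0 else 1) + (if b = c then 0 else 1) := by
      by_cases h1 : a = b <;> by_cases h2 : b = c <;> by_cases h3 : a = c <;> simp_all
    simp only [LD_cons_cons] at *
    generalize (if a = b then (0:ℕ) else 1) = cab at *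
    generalize (if b = c then (0:ℕ) else 1) = cbc at *
    generalize (if a = c then (0:ℕ) else 1) = cac at *
    omega
termination_by x y z => x.length + y.length + z.length
decreasing_by all_goals (simp only [List.length_cons]; omega)

theorem NLD_isMetric (x y z : List α) (hx : x ≠ []) (hy : y ≠ []) (hz : z ≠ []) :
    NLD x x = 0 ∧ (NLD x y = 0 → x = y) ∧ NLD x y = NLD y x ∧
    NLD x z ≤ NLD x y + NLD y z := by
  have hm : (1:ℝ) ≤ x.length := by exact_mod_cast List.length_pos_iff.mpr hx
  have hn : (1:ℝ) ≤ y.length := by exact_mod_cast List.length_pos_iff.mpr hy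
  have hp : (1:ℝ) ≤ z.length := by exact_mod_cast List.length_pos_iff.mpr hz
  refine ⟨?_, ?_, ?_, ?_⟩
  · unfold NLD
    rw [LD_self]
    simp
  · unfold NLD
    intro h
    have hd : ((x.length : ℝ) + y.length + LD x y) ≠ 0 := by positivity
    rw [div_eq_zero_iff] at h
    have : (2:ℝ) * LD x y = 0 := by tauto
    have : (LD x y : ℝ) = 0 := by linarith
    exact LD_eq_zero x y (by exact_mod_cast this)
  · unfold NLD
    rw [LD_symm x y]
    ring_nf
  · unfold NLD
    have htri : (LD x z : ℝ) ≤ (LD x y : ℝ) + (LD y z : ℝ) := by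
      exact_mod_cast LD_triangle x y z
    have h1 : (y.length : ℝ) ≤ (x.length : ℝ) + (LD x y : ℝ) := by
      exact_mod_cast le_LD_add x y
    have h2 : (y.length : ℝ) ≤ (z.length : ℝ) + (LD y z : ℝ) := by
      rw [LD_symm y z]; exact_mod_cast le_LD_add z y
    set m := (x.length : ℝ)
    set n := (y.length : ℝ)
    set p := (z.length : ℝ)
    set a := (LD x y : ℝ)
    set b := (LD y z : ℝ)
    set c := (LD x z : ℝ)
    have ha0 : 0 ≤ a := by positivity
    have hb0 : 0 ≤ b := by positivity
    have hc0 : 0 ≤ c := by positivity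
    have d0 : (0:ℝ) < m + p + c := by linarith
    have d1 : (0:ℝ) < m + n + a := by linarith
    have d2 : (0:ℝ) < n + p + b := by linarith
    have d3 : (0:ℝ) < m + p + (a + b) := by linarith
    have step1 : 2 * c / (m + p + c) ≤ 2 * (a + b) / (m + p + (a + b)) := by
      rw [div_le_div_iff₀ d0 d3]
      nlinarith [mul_le_mul_of_nonneg_right htri (show (0:ℝ) ≤ m + p by linarith)]
    have step2 : 2 * (a + b) / (m + p + (a + b))
        = 2 * a / (m + p + (a + b)) + 2 * b / (m + p + (a + b)) := by
      ring
    have step3 : 2 * a / (m + p + (a + b)) ≤ 2 * a / (m + n + a) := by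
      apply div_le_div_of_nonneg_left (by positivity) d1
      linarith
    have step4 : 2 * b / (m + p + (a + b)) ≤ 2 * b / (n + p + b) := by
      apply div_le_div_of_nonneg_left (by positivity) d2
      linarith
    linarith
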